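/- Let c ∈ (−1,1), a = √((1+c)/2), b = √((1−c)/2), let A11, A12, A13, A22, A23, A33 be real numbers, and set H12 = A11*A22 − A12², H13 = A11*A33 − A13², H23 = A22*A33 − A23², K = A11*A22*A33 + 2*A12*A13*A23 − A11*A23² − A22*A13² − A33*A12², and ρ = 2(H12 + H13 + H23) − 2c. Define D : ℝ → ℝ by D(l) = (1 − l*A11)·cos(a*l)·cosh(b*l) + (−A22 + l*H12)·(sin(a*l)/a)·cosh(b*l) + (−A33 + l*H13)·cos(a*l)·(sinh(b*l)/b) + (H23 − l*K)·(sin(a*l)/a)·(sinh(b*l)/b). Then the sixth derivative of D at 0 equals c + 4c³ + (−4 − 12c + 16c²)·H12 + (−4 + 12c + 16c²)·H13 + (4c² − 1)·ρ. -/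

import Mathlib

noncomputable def detQF (a b p1 q1 p2 q2 p3 q3 p4 q4 : ℝ) : ℝ → ℝ := fun l =>
  (p1 + q1*l) * (Real.cos (a*l) * Real.cosh (b*l))
  + (p2 + q2*l) * ((Real.sin (a*l)/a) * Real.cosh (b*l))
  + (p3 + q3*l) * (Real.cos (a*l) * (Real.sinh (b*l)/b))
  + (p4 + q4*l) * ((Real.sin (a*l)/a) * (Real.sinh (b*l)/b))

lemma detQF_hasDerivAt (a b : ℝ) (ha : a ≠ 0) (hb : b ≠ 0)
    (p1 q1 p2 q2 p3 q3 p4 q4 l : ℝ) :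
    HasDerivAt (detQF a b p1 q1 p2 q2 p3 q3 p4 q4)
      (detQF a b (q1 + p2 + p3) (q2 + q3) (q2 - a^2*p1 + p4) (-(a^2)*q1 + q4)
        (q3 + b^2*p1 + p4) (b^2*q1 + q4) (q4 + b^2*p2 - a^2*p3) (b^2*q2 - a^2*q3) l) l := by
  have hal : HasDerivAt (fun l : ℝ => a*l) a l := by
    simpa using (hasDerivAt_id l).const_mul a
  have hbl : HasDerivAt (fun l : ℝ => b*l) b l := by
    simpa using (hasDerivAt_id l).const_mul b
  have hcos : HasDerivAt (fun l : ℝ => Real.cos (a*l)) (-Real.sin (a*l) * a) l := hal.cos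
  have hsin : HasDerivAt (fun l : ℝ => Real.sin (a*l)/a) (Real.cos (a*l) * a / a) l :=
    hal.sin.div_const a
  have hcosh : HasDerivAt (fun l : ℝ => Real.cosh (b*l)) (Real.sinh (b*l) * b) l := hbl.cosh
  have hsinh : HasDerivAt (fun l : ℝ => Real.sinh (b*l)/b) (Real.cosh (b*l) * b / b) l :=
    hbl.sinh.div_const b
  have h1 : HasDerivAt (fun l : ℝ => p1 + q1*l) q1 l := by
    simpa using ((hasDerivAt_id l).const_mul q1).const_add p1
  have h2 : HasDerivAt (fun l : ℝ => p2 + q2*l) q2 l := by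
    simpa using ((hasDerivAt_id l).const_mul q2).const_add p2
  have h3 : HasDerivAt (fun l : ℝ => p3 + q3*l) q3 l := by
    simpa using ((hasDerivAt_id l).const_mul q3).const_add p3
  have h4 : HasDerivAt (fun l : ℝ => p4 + q4*l) q4 l := by
    simpa using ((hasDerivAt_id l).const_mul q4).const_add p4
  have H := (((h1.mul (hcos.mul hcosh)).add (h2.mul (hsin.mul hcosh))).add
    (h3.mul (hcos.mul hsinh))).add (h4.mul (hsin.mul hsinh))
  unfold detQF
  refine H.congr_deriv ?_
  simp only [Pi.mul_apply]
  field_simp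
  ring

lemma detQF_deriv (a b : ℝ) (ha : a ≠ 0) (hb : b ≠ 0)
    (p1 q1 p2 q2 p3 q3 p4 q4 : ℝ) :
    deriv (detQF a b p1 q1 p2 q2 p3 q3 p4 q4)
      = detQF a b (q1 + p2 + p3) (q2 + q3) (q2 - a^2*p1 + p4) (-(a^2)*q1 + q4)
        (q3 + b^2*p1 + p4) (b^2*q1 + q4) (q4 + b^2*p2 - a^2*p3) (b^2*q2 - a^2*q3) := by
  funext l
  exact (detQF_hasDerivAt a b ha hb p1 q1 p2 q2 p3 q3 p4 q4 l).deriv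

lemma detQF_zero (a b p1 q1 p2 q2 p3 q3 p4 q4 : ℝ) :
    detQF a b p1 q1 p2 q2 p3 q3 p4 q4 0 = p1 := by
  simp [detQF]

theorem detQ_sixth_deriv_S2xH2 (c : ℝ) (hc : c ∈ Set.Ioo (-1 : ℝ) 1)
    (a b : ℝ) (ha : a = Real.sqrt ((1 + c)/2)) (hb : b = Real.sqrt ((1 - c)/2))
    (A11 A12 A13 A22 A23 A33 H12 H13 H23 K ρ : ℝ)
    (hH12 : H12 = A11*A22 - A12^2)
    (hH13 : H13 = A11*A33 - A13^2)
    (hH23 : H23 = A22*A33 - A23^2)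
    (hK : K = A11*A22*A33 + 2*A12*A13*A23 - A11*A23^2 - A22*A13^2 - A33*A12^2)
    (hρ : ρ = 2*(H12 + H13 + H23) - 2*c)
    (D : ℝ → ℝ)
    (hD : ∀ l : ℝ, D l =
      (1 - l*A11) * Real.cos (a*l) * Real.cosh (b*l)
      + (-A22 + l*H12) * (Real.sin (a*l)/a) * Real.cosh (b*l)
      + (-A33 + l*H13) * Real.cos (a*l) * (Real.sinh (b*l)/b)
      + (H23 - l*K) * (Real.sin (a*l)/a) * (Real.sinh (b*l)/b)) :
    iteratedDeriv 6 D 0 =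
      c + 4*c^3 + (-4 - 12*c + 16*c^2)*H12 + (-4 + 12*c + 16*c^2)*H13 + (4*c^2 - 1)*ρ := by
  obtain ⟨hc1, hc2⟩ := hc
  have hA : a^2 = (1 + c)/2 := by rw [ha, Real.sq_sqrt (by linarith)]
  have hB : b^2 = (1 - c)/2 := by rw [hb, Real.sq_sqrt (by linarith)]
  have ha0 : a ≠ 0 := by
    intro h; rw [h] at hA; simp at hA; linarith
  have hb0 : b ≠ 0 := by
    intro h; rw [h] at hB; simp at hB; linarith
  have h0 : D = detQF a b 1 (-A11) (-A22) H12 (-A33) H13 H23 (-K) := by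
    funext l
    rw [hD]
    unfold detQF
    ring
  have h6 : iteratedDeriv 6 D 0 = deriv (deriv (deriv (deriv (deriv (deriv D))))) 0 := by
    simp [iteratedDeriv_succ, iteratedDeriv_zero]
  rw [h6, h0, detQF_deriv a b ha0 hb0, detQF_deriv a b ha0 hb0, detQF_deriv a b ha0 hb0,
    detQF_deriv a b ha0 hb0, detQF_deriv a b ha0 hb0, detQF_deriv a b ha0 hb0, detQF_zero,
    hA, hB, hρ, hH12, hH13, hH23]
  ring
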